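/- (Squaring weak set algebras.) Let W = {s : ℕ → ℕ | s(i) = i for all but finitely many i}, and let B be a collection of subsets of W containing W and closed under intersection, complement relative to W, and the operations S_{ij}(X) = {q ∈ W : q ∘ [i,j] ∈ X} and S^i_j(X) = {q ∈ W : q ∘ [i/j] ∈ X} (i ≠ j ∈ ℕ). Then there exist a set M and an injective map g : B → 𝒫(ℕ → M) such that g(W) = (ℕ → M), g(X ∩ Y) = g(X) ∩ g(Y), g(W ∖ X) = (ℕ → M) ∖ g(X), g(S_{ij}(X)) = {q : q ∘ [i,j] ∈ g(X)}, and g(S^i_j(X)) = {q : q ∘ [i/j] ∈ g(X)} for all X, Y ∈ B and all i ≠ j ∈ ℕ. Thus every subalgebra of the full weak set algebra is isomorphic to a subalgebra of a full square set algebra. -/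

import Mathlib

/-- The replacement `[i/j] : ℕ → ℕ`, sending `i` to `j` and fixing everything else. -/
def replacement (i j : ℕ) : ℕ → ℕ := fun k => if k = i then j else k

/-- The weak space over `ℕ`: sequences agreeing with the identity at all but finitely
many coordinates. -/
def weakSpace : Set (ℕ → ℕ) := {s : ℕ → ℕ | {i : ℕ | s i ≠ i}.Finite}

private def trunc (q : ℕ → ℕ) (n : ℕ) : ℕ → ℕ := fun k => if k < n then q k else k

private lemma trunc_mem_weak (q : ℕ → ℕ) (n : ℕ) : trunc q n ∈ weakSpace := by
  apply Set.Finite.subset (Set.finite_Iio n)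
  intro k hk
  simp only [trunc, Set.mem_setOf_eq] at hk
  by_contra h
  simp only [Set.mem_Iio, not_lt] at h
  rw [if_neg (by omega)] at hk
  exact hk rfl

private lemma trunc_eq_of_weak {s : ℕ → ℕ} (hs : s ∈ weakSpace) :
    ∀ᶠ n in Filter.cofinite, trunc s n = s := by
  obtain ⟨N, hN⟩ := (hs : {i : ℕ | s i ≠ i}.Finite).bddAbove
  rw [Filter.eventually_cofinite]
  apply Set.Finite.subset (Set.finite_Iic N)
  intro n hn
  simp only [Set.mem_setOf_eq] at hn
  by_contra h
  simp only [Set.mem_Iic, not_le] at h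
  apply hn
  funext k
  simp only [trunc]
  by_cases hk : k < n
  · rw [if_pos hk]
  · rw [if_neg hk]
    by_contra hne
    have hkN : k ≤ N := hN (show s k ≠ k from fun hh => hne hh.symm)
    omega

private lemma trunc_comp_swap (q : ℕ → ℕ) {i j n : ℕ} (hi : i < n) (hj : j < n) :
    trunc q n ∘ (Equiv.swap i j) = trunc (q ∘ (Equiv.swap i j)) n := by
  funext k
  simp only [trunc, Function.comp_apply]
  rcases lt_or_ge k n with hk | hk
  · have : (Equiv.swap i j) k < n := by
      rcases eq_or_ne k i with rfl | h1
      · rwa [Equiv.swap_apply_left]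
      rcases eq_or_ne k j with rfl | h2
      · rwa [Equiv.swap_apply_right]
      · rwa [Equiv.swap_apply_of_ne_of_ne h1 h2]
    rw [if_pos this, if_pos hk]
  · have h1 : k ≠ i := by omega
    have h2 : k ≠ j := by omega
    rw [Equiv.swap_apply_of_ne_of_ne h1 h2]

private lemma trunc_comp_repl (q : ℕ → ℕ) {i j n : ℕ} (hi : i < n) (hj : j < n) :
    trunc q n ∘ (replacement i j) = trunc (q ∘ (replacement i j)) n := by
  funext k
  simp only [trunc, replacement, Function.comp_apply]
  rcases lt_or_ge k n with hk | hk
  · have : (if k = i then j else k) < n := by split <;> omega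
    simp only [if_pos hk]
    exact if_pos this
  · have h1 : k ≠ i := by omega
    simp only [if_neg h1]

/-- squaring weak set algebras: any collection `B` of subsets of the weak
space `W`, containing `W` and closed under intersection, complement relative to `W`, and
the substitution operations `S_{ij}` and `S^i_j`, embeds (injectively on `B`, preserving
all the operations) into the full square set algebra over some base `M`. -/
theorem weak_set_algebra_squared
    (B : Set (Set (ℕ → ℕ)))
    (hBsub : ∀ X ∈ B, X ⊆ weakSpace)
    (hBtop : weakSpace ∈ B)
    (hBinter : ∀ X ∈ B, ∀ Y ∈ B, X ∩ Y ∈ B)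
    (hBcompl : ∀ X ∈ B, weakSpace \ X ∈ B)
    (hBt : ∀ X ∈ B, ∀ i j : ℕ, i ≠ j →
      {q ∈ weakSpace | q ∘ (Equiv.swap i j) ∈ X} ∈ B)
    (hBr : ∀ X ∈ B, ∀ i j : ℕ, i ≠ j →
      {q ∈ weakSpace | q ∘ (replacement i j) ∈ X} ∈ B) :
    ∃ (M : Type) (g : Set (ℕ → ℕ) → Set (ℕ → M)),
      (∀ X ∈ B, ∀ Y ∈ B, g X = g Y → X = Y) ∧
      g weakSpace = Set.univ ∧
      (∀ X ∈ B, ∀ Y ∈ B, g (X ∩ Y) = g X ∩ g Y) ∧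
      (∀ X ∈ B, g (weakSpace \ X) = Set.univ \ g X) ∧
      (∀ X ∈ B, ∀ i j : ℕ, i ≠ j →
        g {q ∈ weakSpace | q ∘ (Equiv.swap i j) ∈ X}
          = {q : ℕ → M | q ∘ (Equiv.swap i j) ∈ g X}) ∧
      (∀ X ∈ B, ∀ i j : ℕ, i ≠ j →
        g {q ∈ weakSpace | q ∘ (replacement i j) ∈ X}
          = {q : ℕ → M | q ∘ (replacement i j) ∈ g X}) := by
  classical
  let F : Ultrafilter ℕ := Filter.hyperfilter ℕ
  have hF : ∀ {s : Set ℕ}, s ∈ Filter.cofinite → s ∈ F :=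
    fun h => Filter.hyperfilter_le_cofinite h
  set g : Set (ℕ → ℕ) → Set (ℕ → ℕ) :=
    fun X => {q | {n | trunc q n ∈ X} ∈ F} with hg
  -- a congruence helper: sets agreeing F-a.e. together in/out of F
  have hcongr : ∀ {s t c : Set ℕ}, c ∈ F → (∀ n ∈ c, (n ∈ s ↔ n ∈ t)) →
      (s ∈ F ↔ t ∈ F) := by
    intro s t c hc h
    constructor
    · intro hs
      exact Filter.mem_of_superset (Filter.inter_mem hs hc)
        (fun n hn => (h n hn.2).1 hn.1)
    · intro ht
      exact Filter.mem_of_superset (Filter.inter_mem ht hc)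
        (fun n hn => (h n hn.2).2 hn.1)
  -- key: for weak s, s ∈ g X ↔ s ∈ X
  have key : ∀ (X : Set (ℕ → ℕ)), ∀ s ∈ weakSpace, (s ∈ g X ↔ s ∈ X) := by
    intro X s hs
    have hcof : {n | trunc s n = s} ∈ F := hF (trunc_eq_of_weak hs)
    constructor
    · intro h
      obtain ⟨n, hn1, hn2⟩ := Filter.nonempty_of_mem (Filter.inter_mem h hcof)
      simp only [Set.mem_setOf_eq] at hn1 hn2
      rwa [hn2] at hn1
    · intro h
      exact Filter.mem_of_superset hcof (fun n hn => by
        simp only [Set.mem_setOf_eq] at hn ⊢; rw [hn]; exact h)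
  refine ⟨ℕ, g, ?_, ?_, ?_, ?_, ?_, ?_⟩
  · -- injectivity on B
    intro X hX Y hY hXY
    ext s
    constructor
    · intro h
      have hs := hBsub X hX h
      exact (key Y s hs).1 (hXY ▸ (key X s hs).2 h)
    · intro h
      have hs := hBsub Y hY h
      exact (key X s hs).1 (hXY.symm ▸ (key Y s hs).2 h)
  · -- top
    ext q
    simp only [hg, Set.mem_setOf_eq, Set.mem_univ, iff_true]
    exact Filter.univ_mem' (fun n => trunc_mem_weak q n)
  · -- intersection
    intro X _ Y _
    ext q
    simp only [hg, Set.mem_setOf_eq, Set.mem_inter_iff]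
    constructor
    · intro h
      exact ⟨Filter.mem_of_superset h (fun n hn => hn.1),
             Filter.mem_of_superset h (fun n hn => hn.2)⟩
    · intro ⟨h1, h2⟩
      exact Filter.mem_of_superset (Filter.inter_mem h1 h2) (fun n hn => hn)
  · -- complement
    intro X _
    ext q
    simp only [hg, Set.mem_setOf_eq, Set.mem_diff, Set.mem_univ, true_and]
    have : {n | trunc q n ∈ weakSpace ∧ trunc q n ∉ X} = {n | trunc q n ∈ X}ᶜ := by
      ext n
      simp [trunc_mem_weak q n]
    rw [this]
    exact Ultrafilter.compl_mem_iff_notMem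
  · -- swaps
    intro X _ i j _
    ext q
    simp only [hg, Set.mem_setOf_eq]
    have hc : {n | max i j < n} ∈ F := by
      apply hF
      rw [Filter.mem_cofinite]
      apply Set.Finite.subset (Set.finite_Iic (max i j))
      intro n hn
      simp only [Set.mem_compl_iff, Set.mem_setOf_eq, not_lt] at hn
      exact hn
    have := hcongr (s := {n | trunc q n ∈ {p ∈ weakSpace | p ∘ (Equiv.swap i j) ∈ X}})
      (t := {n | trunc (q ∘ (Equiv.swap i j)) n ∈ X}) hc ?_
    · exact this
    · intro n hn
      simp only [Set.mem_setOf_eq] at hn ⊢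
      rw [← trunc_comp_swap q (lt_of_le_of_lt (le_max_left i j) hn)
            (lt_of_le_of_lt (le_max_right i j) hn)]
      simp [Set.mem_sep_iff, trunc_mem_weak q n]
  · -- replacements
    intro X _ i j _
    ext q
    simp only [hg, Set.mem_setOf_eq]
    have hc : {n | max i j < n} ∈ F := by
      apply hF
      rw [Filter.mem_cofinite]
      apply Set.Finite.subset (Set.finite_Iic (max i j))
      intro n hn
      simp only [Set.mem_compl_iff, Set.mem_setOf_eq, not_lt] at hn
      exact hn
    have := hcongr (s := {n | trunc q n ∈ {p ∈ weakSpace | p ∘ (replacement i j) ∈ X}})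
      (t := {n | trunc (q ∘ (replacement i j)) n ∈ X}) hc ?_
    · exact this
    · intro n hn
      simp only [Set.mem_setOf_eq] at hn ⊢
      rw [← trunc_comp_repl q (lt_of_le_of_lt (le_max_left i j) hn)
            (lt_of_le_of_lt (le_max_right i j) hn)]
      simp [Set.mem_sep_iff, trunc_mem_weak q n]
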